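/- Let p ≥ 1, let Σ : ℝ^p → PD_p(ℝ) assign to each point a real positive definite p×p matrix, and let ξ be a probability measure on (0,∞). Define R^S(τ) = ∫_0^∞ exp(−τ²/t²) ξ(dt) for τ ≥ 0, and define C(x,y) = π^{-p/2} det((Σ_x+Σ_y)/2)^{-1/2} ∫_0^∞ exp(−Q_xy(x−y)/t²) ξ(dt). Then C(x,x) > 0 for every x, and for all x, y ∈ ℝ^p the normalized kernel satisfies C(x,y) / ( √(C(x,x)) · √(C(y,y)) ) = φ_xy · R^S( √(Q_xy(x−y)) ). -/

import Mathlib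

open MeasureTheory Matrix Real

/-- `Q_xy(h) = hᵀ ((Σx+Σy)/2)⁻¹ h`. -/
noncomputable def Qform {p : ℕ} (A B : Matrix (Fin p) (Fin p) ℝ) (h : Fin p → ℝ) : ℝ :=
  h ⬝ᵥ ((((2:ℝ)⁻¹ • (A + B))⁻¹).mulVec h)

/-- `φ_xy = det(Σx)^{1/4} det(Σy)^{1/4} det((Σx+Σy)/2)^{-1/2}`. -/
noncomputable def phiFactor {p : ℕ} (A B : Matrix (Fin p) (Fin p) ℝ) : ℝ :=
  A.det ^ ((1:ℝ) / 4) * B.det ^ ((1:ℝ) / 4) * ((2:ℝ)⁻¹ • (A + B)).det ^ (-(1:ℝ) / 2)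

lemma posdef_half_add {p : ℕ} {A B : Matrix (Fin p) (Fin p) ℝ}
    (hA : A.PosDef) (hB : B.PosDef) : ((2:ℝ)⁻¹ • (A + B)).PosDef := by
  refine PosDef.of_dotProduct_mulVec_pos ?_ ?_
  · show _ᴴ = _
    rw [conjTranspose_smul, (hA.add hB).1]
    norm_num
  · intro x hx
    simp only [smul_mulVec, dotProduct_smul, smul_eq_mul]
    have := (hA.add hB).dotProduct_mulVec_pos hx
    positivity

lemma Qform_nonneg {p : ℕ} {A B : Matrix (Fin p) (Fin p) ℝ}
    (hA : A.PosDef) (hB : B.PosDef) (h : Fin p → ℝ) : 0 ≤ Qform A B h :=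
  by have := (posdef_half_add hA hB).inv.posSemidef.dotProduct_mulVec_nonneg h; rw [star_trivial] at this; exact this

lemma mat_half_add_self {p : ℕ} (A : Matrix (Fin p) (Fin p) ℝ) :
    (2:ℝ)⁻¹ • (A + A) = A := by
  rw [← two_smul ℝ A, smul_smul]
  norm_num

/-- normalizing the mixture covariance yields the Paciorek–Schervish
class `R^{NS}(x,y) = φ_xy R^S(√(Q_xy(x−y)))`. -/
theorem normalized_mixture_is_paciorek (p : ℕ) (hp : 1 ≤ p)
    (S : (Fin p → ℝ) → Matrix (Fin p) (Fin p) ℝ) (hS : ∀ x, (S x).PosDef)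
    (ξ : Measure ℝ) [IsProbabilityMeasure ξ] (hξ : ξ (Set.Iic 0) = 0)
    (RS : ℝ → ℝ)
    (hRS : ∀ τ : ℝ, 0 ≤ τ → RS τ = ∫ t in Set.Ioi (0:ℝ), Real.exp (-τ ^ 2 / t ^ 2) ∂ξ)
    (C : (Fin p → ℝ) → (Fin p → ℝ) → ℝ)
    (hC : ∀ x y, C x y = Real.pi ^ (-(p : ℝ) / 2) *
      ((2:ℝ)⁻¹ • (S x + S y)).det ^ (-(1:ℝ) / 2) *
      ∫ t in Set.Ioi (0:ℝ), Real.exp (-(Qform (S x) (S y) (x - y)) / t ^ 2) ∂ξ) :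
    (∀ x : Fin p → ℝ, 0 < C x x) ∧
    ∀ x y : Fin p → ℝ,
      C x y / (Real.sqrt (C x x) * Real.sqrt (C y y)) =
        phiFactor (S x) (S y) * RS (Real.sqrt (Qform (S x) (S y) (x - y))) := by
  have hIoi : ξ (Set.Ioi (0:ℝ)) = 1 := by
    rw [← Set.compl_Iic, measure_compl measurableSet_Iic (by simp), hξ, measure_univ]
    simp
  have hInt1 : (∫ t in Set.Ioi (0:ℝ), (1:ℝ) ∂ξ) = 1 := by
    rw [setIntegral_const, measureReal_def, hIoi]
    simp
  have hCxx : ∀ x, C x x = Real.pi ^ (-(p : ℝ) / 2) * (S x).det ^ (-(1:ℝ) / 2) := by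
    intro x
    rw [hC x x]
    have hq : Qform (S x) (S x) (x - x) = 0 := by
      simp [Qform, sub_self]
    rw [hq, mat_half_add_self]
    simp only [neg_zero, zero_div, Real.exp_zero]
    rw [hInt1, mul_one]
  have hpos : ∀ x, 0 < C x x := by
    intro x
    rw [hCxx]
    have := (hS x).det_pos
    have := Real.pi_pos
    positivity
  refine ⟨hpos, fun x y => ?_⟩
  set Q := Qform (S x) (S y) (x - y) with hQdef
  have hQ : 0 ≤ Q := Qform_nonneg (hS x) (hS y) _
  set I := ∫ t in Set.Ioi (0:ℝ), Real.exp (-Q / t ^ 2) ∂ξ with hI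
  have hRSval : RS (Real.sqrt Q) = I := by
    rw [hRS _ (Real.sqrt_nonneg Q), Real.sq_sqrt hQ]
  set a := Real.pi ^ (-(p : ℝ) / 2) with ha
  have hapos : 0 < a := Real.rpow_pos_of_pos Real.pi_pos _
  set dX := (S x).det with hdX
  set dY := (S y).det with hdY
  set dM := ((2:ℝ)⁻¹ • (S x + S y)).det with hdM
  have hdXpos : 0 < dX := (hS x).det_pos
  have hdYpos : 0 < dY := (hS y).det_pos
  have hdMpos : 0 < dM := (posdef_half_add (hS x) (hS y)).det_pos
  have hsqrt : ∀ d : ℝ, 0 < d →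
      Real.sqrt (a * d ^ (-(1:ℝ) / 2)) = Real.sqrt a * d ^ (-(1:ℝ) / 4) := by
    intro d hd
    rw [Real.sqrt_mul hapos.le]
    congr 1
    rw [Real.sqrt_eq_rpow, ← Real.rpow_mul hd.le]
    norm_num
  rw [hC x y, hCxx x, hCxx y, hsqrt dX hdXpos, hsqrt dY hdYpos, hRSval]
  have key : Real.sqrt a * dX ^ (-(1:ℝ) / 4) * (Real.sqrt a * dY ^ (-(1:ℝ) / 4)) =
      a * (dX ^ (-(1:ℝ) / 4) * dY ^ (-(1:ℝ) / 4)) := by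
    rw [mul_mul_mul_comm, Real.mul_self_sqrt hapos.le]
  rw [key]
  have hneg : ∀ d : ℝ, 0 < d → d ^ (-(1:ℝ) / 4) = (d ^ ((1:ℝ)/4))⁻¹ := by
    intro d hd
    rw [neg_div, Real.rpow_neg hd.le]
  rw [hneg dX hdXpos, hneg dY hdYpos]
  have h1 : (0:ℝ) < dX ^ ((1:ℝ)/4) := Real.rpow_pos_of_pos hdXpos _
  have h2 : (0:ℝ) < dY ^ ((1:ℝ)/4) := Real.rpow_pos_of_pos hdYpos _
  rw [phiFactor, ← hdX, ← hdY, ← hdM, ← hQdef, ← hI]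
  clear_value I dM dX dY
  field_simp
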